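/- Fix (s,a) ∈ S × A and v : S → ℝ, and let n = |S|. Let σ : {1,…,n} → S be a bijection such that v(σ(1)) ≥ v(σ(2)) ≥ … ≥ v(σ(n)), and let k ∈ {1,…,n} satisfy P̲(σ(k),s,a) ≤ 1 − ∑_{i<k} P̄(σ(i),s,a) − ∑_{i>k} P̲(σ(i),s,a) ≤ P̄(σ(k),s,a). Define q* : S → ℝ by q*(σ(i)) = P̄(σ(i),s,a) for i < k, q*(σ(k)) = 1 − ∑_{i<k} P̄(σ(i),s,a) − ∑_{i>k} P̲(σ(i),s,a), and q*(σ(i)) = P̲(σ(i),s,a) for i > k. Then q* ∈ Δ_{s,a}, and for every p ∈ Δ_{s,a}, ∑_{s'∈S} p(s') v(s') ≤ ∑_{s'∈S} q*(s') v(s'); in particular max_{p ∈ Δ_{s,a}} ∑_{s'∈S} p(s') v(s') = ∑_{s'∈S} q*(s') v(s'). -/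
import Mathlib


/-- The ambiguity set `Δ_{s,a}` of transition probability vectors compatible with the
interval bounds `Plow`, `Pup` at state `s` and action `a`. -/
def ambiguitySet {S A : Type*} [Fintype S] (Plow Pup : S → S → A → ℝ) (s : S) (a : A) :
    Set (S → ℝ) :=
  {p | (∀ s', 0 ≤ p s' ∧ p s' ≤ 1 ∧ Plow s' s a ≤ p s' ∧ p s' ≤ Pup s' s a) ∧
    ∑ s', p s' = 1}

/-- `min_{p ∈ Δ_{s,a}} ∑_{s' ∈ S} p(s') v(s')`. -/
noncomputable def minExp {S A : Type*} [Fintype S] (Plow Pup : S → S → A → ℝ)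
    (s : S) (a : A) (v : S → ℝ) : ℝ :=
  sInf ((fun p : S → ℝ => ∑ s', p s' * v s') '' ambiguitySet Plow Pup s a)

/-- `max_{p ∈ Δ_{s,a}} ∑_{s' ∈ S} p(s') v(s')`. -/
noncomputable def maxExp {S A : Type*} [Fintype S] (Plow Pup : S → S → A → ℝ)
    (s : S) (a : A) (v : S → ℝ) : ℝ :=
  sSup ((fun p : S → ℝ => ∑ s', p s' * v s') '' ambiguitySet Plow Pup s a)

/-- The pessimistic Bellman-policy operator
`F̲(v,π)(s) = R̲(s,π(s)) + γ · min_{p ∈ Δ_{s,π(s)}} ∑_{s'} p(s') v(s')`. -/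
noncomputable def Fpess {S A : Type*} [Fintype S] (Plow Pup : S → S → A → ℝ)
    (Rlow : S → A → ℝ) (γ : ℝ) (v : S → ℝ) (π : S → A) (s : S) : ℝ :=
  Rlow s (π s) + γ * minExp Plow Pup s (π s) v

/-- The optimistic Bellman-policy operator
`F̄(v,π)(s) = R̄(s,π(s)) + γ · max_{p ∈ Δ_{s,π(s)}} ∑_{s'} p(s') v(s')`. -/
noncomputable def Fopt {S A : Type*} [Fintype S] (Plow Pup : S → S → A → ℝ)
    (Rup : S → A → ℝ) (γ : ℝ) (v : S → ℝ) (π : S → A) (s : S) : ℝ :=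
  Rup s (π s) + γ * maxExp Plow Pup s (π s) v

/-- The pessimistic interval Bellman operator
`G̲(v)(s) = sup_{a ∈ A} [ R̲(s,a) + γ · min_{p ∈ Δ_{s,a}} ∑_{s'} p(s') v(s') ]`. -/
noncomputable def Gpess {S A : Type*} [Fintype S] (Plow Pup : S → S → A → ℝ)
    (Rlow : S → A → ℝ) (γ : ℝ) (v : S → ℝ) (s : S) : ℝ :=
  ⨆ a : A, (Rlow s a + γ * minExp Plow Pup s a v)

/-- The optimistic interval Bellman operator
`Ḡ(v)(s) = sup_{a ∈ A} [ R̄(s,a) + γ · max_{p ∈ Δ_{s,a}} ∑_{s'} p(s') v(s') ]`. -/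
noncomputable def Gopt {S A : Type*} [Fintype S] (Plow Pup : S → S → A → ℝ)
    (Rup : S → A → ℝ) (γ : ℝ) (v : S → ℝ) (s : S) : ℝ :=
  ⨆ a : A, (Rup s a + γ * maxExp Plow Pup s a v)

/-- closed-form maximizer of the expected value over the ambiguity set:
the vector `qstar` that assigns the upper bound to the states with the largest values
of `v`, the lower bound to the states with the smallest values, and the residual mass
to the pivot state, attains the maximum of `∑ p(s') v(s')` over `Δ_{s,a}`. -/
theorem maxExp_closed_form {S A : Type*} [Fintype S] [Nonempty S] [Nonempty A]
    (Plow Pup : S → S → A → ℝ)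
    (hP01 : ∀ s' s a, 0 ≤ Plow s' s a ∧ Pup s' s a ≤ 1)
    (hPle : ∀ s' s a, Plow s' s a ≤ Pup s' s a)
    (hPsum : ∀ s a, (∑ s', Plow s' s a) ≤ 1 ∧ 1 ≤ ∑ s', Pup s' s a)
    (s : S) (a : A) (v : S → ℝ)
    (σ : Fin (Fintype.card S) ≃ S) (hσ : Antitone fun i => v (σ i))
    (k : Fin (Fintype.card S)) (ξ : ℝ)
    (hξ : ξ = 1 - (∑ i ∈ Finset.univ.filter (fun i => i < k), Pup (σ i) s a)
      - ∑ i ∈ Finset.univ.filter (fun i => k < i), Plow (σ i) s a)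
    (hk : Plow (σ k) s a ≤ ξ ∧ ξ ≤ Pup (σ k) s a)
    (qstar : S → ℝ)
    (hqstar : ∀ i : Fin (Fintype.card S),
      qstar (σ i) = if i < k then Pup (σ i) s a
        else if i = k then ξ else Plow (σ i) s a) :
    qstar ∈ ambiguitySet Plow Pup s a ∧
    (∀ p ∈ ambiguitySet Plow Pup s a,
      (∑ s', p s' * v s') ≤ ∑ s', qstar s' * v s') ∧
    maxExp Plow Pup s a v = ∑ s', qstar s' * v s' := by
  have hsplit : ∀ f : Fin (Fintype.card S) → ℝ,
      ∑ i, f i = (∑ i ∈ Finset.univ.filter (fun i => i < k), f i) + f k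
        + ∑ i ∈ Finset.univ.filter (fun i => k < i), f i := by
    intro f
    rw [← Finset.sum_filter_add_sum_filter_not Finset.univ (fun i => i < k) f]
    have hset : Finset.univ.filter (fun i => ¬ i < k)
        = insert k (Finset.univ.filter (fun i => k < i)) := by
      ext j
      simp only [Finset.mem_filter, Finset.mem_univ, true_and, Finset.mem_insert, not_lt]
      constructor
      · intro h
        rcases eq_or_lt_of_le h with h' | h'
        · exact Or.inl h'.symm
        · exact Or.inr h'
      · rintro (rfl | h)
        · exact le_refl _
        · exact h.le
    rw [hset, Finset.sum_insert (by simp), add_assoc]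
  have hbounds : ∀ s', 0 ≤ qstar s' ∧ qstar s' ≤ 1 ∧ Plow s' s a ≤ qstar s'
      ∧ qstar s' ≤ Pup s' s a := by
    intro s'
    obtain ⟨i, rfl⟩ := σ.surjective s'
    rw [hqstar i]
    rcases lt_trichotomy i k with h | h | h
    · simp only [if_pos h]
      exact ⟨le_trans (hP01 _ _ _).1 (hPle _ _ _), (hP01 _ _ _).2, hPle _ _ _, le_refl _⟩
    · subst h
      simp only [lt_irrefl, if_false, if_pos rfl]
      exact ⟨le_trans (hP01 _ _ _).1 hk.1, le_trans hk.2 (hP01 _ _ _).2, hk.1, hk.2⟩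
    · rw [if_neg (not_lt_of_gt h), if_neg (ne_of_gt h)]
      exact ⟨(hP01 _ _ _).1, le_trans (hPle _ _ _) (hP01 _ _ _).2, le_refl _, hPle _ _ _⟩
  have hsum : ∑ s', qstar s' = 1 := by
    rw [← Equiv.sum_comp σ qstar, hsplit (fun i => qstar (σ i))]
    have h1 : ∀ i ∈ Finset.univ.filter (fun i => i < k), qstar (σ i) = Pup (σ i) s a := by
      intro i hi
      simp only [Finset.mem_filter] at hi
      rw [hqstar i, if_pos hi.2]
    have h2 : ∀ i ∈ Finset.univ.filter (fun i => k < i), qstar (σ i) = Plow (σ i) s a := by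
      intro i hi
      simp only [Finset.mem_filter] at hi
      rw [hqstar i, if_neg (not_lt_of_gt hi.2), if_neg (ne_of_gt hi.2)]
    rw [Finset.sum_congr rfl h1, Finset.sum_congr rfl h2, hqstar k,
      if_neg (lt_irrefl k), if_pos rfl, hξ]
    ring
  have hmem : qstar ∈ ambiguitySet Plow Pup s a := ⟨hbounds, hsum⟩
  have hle : ∀ p ∈ ambiguitySet Plow Pup s a,
      (∑ s', p s' * v s') ≤ ∑ s', qstar s' * v s' := by
    intro p hp
    obtain ⟨hpb, hps⟩ := hp
    have key : ∀ i : Fin (Fintype.card S),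
        (qstar (σ i) - p (σ i)) * v (σ k) ≤ (qstar (σ i) - p (σ i)) * v (σ i) := by
      intro i
      rcases lt_trichotomy i k with h | h | h
      · have hd : 0 ≤ qstar (σ i) - p (σ i) := by
          rw [hqstar i, if_pos h]
          linarith [(hpb (σ i)).2.2.2]
        exact mul_le_mul_of_nonneg_left (hσ h.le) hd
      · subst h; rfl
      · have hd : qstar (σ i) - p (σ i) ≤ 0 := by
          rw [hqstar i, if_neg (not_lt_of_gt h), if_neg (ne_of_gt h)]
          linarith [(hpb (σ i)).2.2.1]
        exact mul_le_mul_of_nonpos_left (hσ h.le) hd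
    have hsum0 : ∑ i, (qstar (σ i) - p (σ i)) = 0 := by
      rw [Finset.sum_sub_distrib, Equiv.sum_comp σ qstar, Equiv.sum_comp σ p, hsum, hps]
      ring
    have h1 : (0:ℝ) ≤ ∑ i, (qstar (σ i) - p (σ i)) * v (σ i) := by
      calc (0:ℝ) = ∑ i, (qstar (σ i) - p (σ i)) * v (σ k) := by
              rw [← Finset.sum_mul, hsum0, zero_mul]
        _ ≤ _ := Finset.sum_le_sum fun i _ => key i
    have h2 : ∑ i, (qstar (σ i) - p (σ i)) * v (σ i)
        = (∑ s', qstar s' * v s') - ∑ s', p s' * v s' := by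
      rw [← Equiv.sum_comp σ (fun s' => qstar s' * v s'),
        ← Equiv.sum_comp σ (fun s' => p s' * v s'), ← Finset.sum_sub_distrib]
      exact Finset.sum_congr rfl fun i _ => by ring
    linarith [h2 ▸ h1]
  have hbdd : BddAbove ((fun p : S → ℝ => ∑ s', p s' * v s') '' ambiguitySet Plow Pup s a) := by
    refine ⟨∑ s', qstar s' * v s', ?_⟩
    rintro x ⟨p, hp, rfl⟩
    exact hle p hp
  refine ⟨hmem, hle, ?_⟩
  apply le_antisymm
  · apply csSup_le ⟨_, Set.mem_image_of_mem _ hmem⟩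
    rintro x ⟨p, hp, rfl⟩
    exact hle p hp
  · exact le_csSup hbdd (Set.mem_image_of_mem _ hmem)
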